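/- arXiv:2305.06699 — 2 statements merged into one kernel-verified Lean document; each statement's English description precedes it below -/
import Mathlib

section
/- Let Y be a pointed metric space and G a Banach space. Every MS-Lipschitz p-summing operator T : Y → G is strictly Lipschitz p-summing. -/
open scoped TensorProduct
open NormedSpace Finset

noncomputable section

/-- The strong `ℓ_p^m` norm of a finite family in a normed space. -/
def strongLp {E : Type*} [NormedAddCommGroup E] (p : ℝ) {m : ℕ} (x : Fin m → E) : ℝ :=
  (∑ j, ‖x j‖ ^ p) ^ (1 / p)

/-- The weak `ℓ_p^{m,w}` norm of a finite family in a normed space. -/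
def weakLp {E : Type*} [NormedAddCommGroup E] [NormedSpace ℝ E] (p : ℝ) {m : ℕ}
    (x : Fin m → E) : ℝ :=
  sSup {r : ℝ | ∃ φ : StrongDual ℝ E, ‖φ‖ ≤ 1 ∧ r = (∑ j, |φ (x j)| ^ p) ^ (1 / p)}

/-- A continuous linear operator is `p`-summing. -/
def IsPSumming {E F : Type*} [NormedAddCommGroup E] [NormedSpace ℝ E]
    [NormedAddCommGroup F] [NormedSpace ℝ F] (p : ℝ) (u : E →L[ℝ] F) : Prop :=
  ∃ K > 0, ∀ (m : ℕ) (x : Fin m → E),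
    strongLp p (fun j => u (x j)) ≤ K * weakLp p x

/-- A continuous linear operator is (Cohen) strongly `p`-summing (`q` is the conjugate of `p`). -/
def IsStronglyPSumming {E F : Type*} [NormedAddCommGroup E] [NormedSpace ℝ E]
    [NormedAddCommGroup F] [NormedSpace ℝ F] (p q : ℝ) (u : E →L[ℝ] F) : Prop :=
  ∃ K > 0, ∀ (m : ℕ) (x : Fin m → E) (φ : Fin m → StrongDual ℝ F),
    ∑ j, |φ j (u (x j))| ≤ K * strongLp p x * weakLp q φ

/-- A continuous linear operator is (Cohen) `p`-nuclear (`q` is the conjugate of `p`). -/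
def IsPNuclear {E F : Type*} [NormedAddCommGroup E] [NormedSpace ℝ E]
    [NormedAddCommGroup F] [NormedSpace ℝ F] (p q : ℝ) (u : E →L[ℝ] F) : Prop :=
  ∃ K > 0, ∀ (m : ℕ) (x : Fin m → E) (φ : Fin m → StrongDual ℝ F),
    ∑ j, |φ j (u (x j))| ≤ K * weakLp p x * weakLp q φ

/-- The Chevet–Saphar norm `d_p` on a tensor product (`q` is the conjugate of `p`):
infimum over all finite representations of `z`. -/
def dpNorm {E G : Type*} [NormedAddCommGroup E] [NormedSpace ℝ E]
    [NormedAddCommGroup G] [NormedSpace ℝ G] (p q : ℝ) (z : TensorProduct ℝ E G) : ℝ :=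
  sInf {r : ℝ | ∃ (m : ℕ) (n : Fin m → E) (h : Fin m → G),
    z = ∑ j, n j ⊗ₜ[ℝ] h j ∧ r = weakLp p n * strongLp q h}

/-- The Chevet–Saphar norm `g_p` on a tensor product (`q` is the conjugate of `p`). -/
def gpNorm {E G : Type*} [NormedAddCommGroup E] [NormedSpace ℝ E]
    [NormedAddCommGroup G] [NormedSpace ℝ G] (p q : ℝ) (z : TensorProduct ℝ E G) : ℝ :=
  sInf {r : ℝ | ∃ (m : ℕ) (n : Fin m → E) (h : Fin m → G),
    z = ∑ j, n j ⊗ₜ[ℝ] h j ∧ r = strongLp p n * weakLp q h}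

/-- The tensor norm `w_p` (`q` is the conjugate of `p`). -/
def wpNorm {E G : Type*} [NormedAddCommGroup E] [NormedSpace ℝ E]
    [NormedAddCommGroup G] [NormedSpace ℝ G] (p q : ℝ) (z : TensorProduct ℝ E G) : ℝ :=
  sInf {r : ℝ | ∃ (m : ℕ) (n : Fin m → E) (h : Fin m → G),
    z = ∑ j, n j ⊗ₜ[ℝ] h j ∧ r = weakLp p n * weakLp q h}

/-- `E`, together with the map `δ : Y → E`, is (isometrically) the Lipschitz-free space
of the pointed metric space `(Y, y₀)`: `δ` sends the base point to `0`, is an isometric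
embedding, has dense linear span, and the norm of finite combinations of point evaluations
is computed against the unit ball of `Lip₀(Y)`. -/
structure IsFreeSpace (Y : Type*) [MetricSpace Y] (y₀ : Y)
    (E : Type*) [NormedAddCommGroup E] [NormedSpace ℝ E] [CompleteSpace E]
    (δ : Y → E) : Prop where
  map_base : δ y₀ = 0
  isometry : ∀ x y : Y, ‖δ x - δ y‖ = dist x y
  dense_span : (Submodule.span ℝ (Set.range δ)).topologicalClosure = ⊤
  norm_eq : ∀ (n : ℕ) (a : Fin n → ℝ) (x : Fin n → Y),
    ‖∑ i, a i • δ (x i)‖ =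
      sSup {r : ℝ | ∃ s : Y → ℝ, LipschitzWith 1 s ∧ s y₀ = 0 ∧ r = |∑ i, a i * s (x i)|}

end

noncomputable section

variable {Y W FY FW : Type*} [MetricSpace Y] [MetricSpace W]
  [NormedAddCommGroup FY] [NormedSpace ℝ FY] [NormedAddCommGroup FW] [NormedSpace ℝ FW]

/-- `T : Y → W` is MS-Lipschitz `p`-summing (`q` is the conjugate of `p`), the free spaces
of `Y` and `W` being realized as `FY`, `FW` via `δY`, `δW`.  Elements of `W^# = F(W)^*` are
encoded as elements of `Dual ℝ FW`, and `d_p^L` is the Chevet–Saphar norm computed in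
`F(Y) ⊗ W^#`. -/
def MSLipPSumming (p q : ℝ) (δY : Y → FY) (δW : W → FW) (T : Y → W) : Prop :=
  ∃ K > 0, ∀ (k : ℕ) (x y : Fin k → Y) (f : Fin k → StrongDual ℝ FW),
    |∑ l, (f l (δW (T (x l))) - f l (δW (T (y l))))| ≤
      K * dpNorm p q (∑ l, (δY (x l) - δY (y l)) ⊗ₜ[ℝ] f l)

/-- `T : Y → W` is MS-strongly Lipschitz `p`-summing (`q` is the conjugate of `p`). -/
def MSStronglyLipPSumming (p q : ℝ) (δY : Y → FY) (δW : W → FW) (T : Y → W) : Prop :=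
  ∃ K > 0, ∀ (k : ℕ) (x y : Fin k → Y) (f : Fin k → StrongDual ℝ FW),
    |∑ l, (f l (δW (T (x l))) - f l (δW (T (y l))))| ≤
      K * gpNorm p q (∑ l, (δY (x l) - δY (y l)) ⊗ₜ[ℝ] f l)

/-- `T : Y → W` is MS-Lipschitz `p`-nuclear (`q` is the conjugate of `p`). -/
def MSLipPNuclear (p q : ℝ) (δY : Y → FY) (δW : W → FW) (T : Y → W) : Prop :=
  ∃ K > 0, ∀ (k : ℕ) (x y : Fin k → Y) (f : Fin k → StrongDual ℝ FW),
    |∑ l, (f l (δW (T (x l))) - f l (δW (T (y l))))| ≤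
      K * wpNorm p q (∑ l, (δY (x l) - δY (y l)) ⊗ₜ[ℝ] f l)

end

section Aux

private lemma finsupp_sum_fin {G : Type*} {V : Type*} [AddCommGroup V] [Module ℝ V]
    (c : G →₀ ℝ) (f : G → V) :
    ∑ g ∈ c.support, c g • f g =
      ∑ i : Fin c.support.card,
        c (c.support.equivFin.symm i) • f (c.support.equivFin.symm i) := by
  rw [← Finset.sum_coe_sort c.support (fun g => c g • f g),
    ← Equiv.sum_comp c.support.equivFin.symm (fun g : c.support => c (g : G) • f (g : G))]

private lemma key_norm_bound {G FG : Type*}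
    [NormedAddCommGroup G] [NormedSpace ℝ G]
    [NormedAddCommGroup FG] [NormedSpace ℝ FG] [CompleteSpace FG] {δG : G → FG}
    (hFG : IsFreeSpace G 0 FG δG) (c : G →₀ ℝ) :
    ‖∑ g ∈ c.support, c g • g‖ ≤ ‖∑ g ∈ c.support, c g • δG g‖ := by
  set n := c.support.card with hn
  set e : Fin n → G := fun i => (c.support.equivFin.symm i : G) with he
  set a : Fin n → ℝ := fun i => c (e i) with ha
  have h1 : ∑ g ∈ c.support, c g • δG g = ∑ i, a i • δG (e i) := finsupp_sum_fin c δG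
  have h2 : ∑ g ∈ c.support, c g • g = ∑ i, a i • e i := finsupp_sum_fin c id
  set M := ‖∑ g ∈ c.support, c g • δG g‖ with hM
  have hnorm : M = sSup {r : ℝ | ∃ s : G → ℝ, LipschitzWith 1 s ∧ s 0 = 0 ∧
      r = |∑ i, a i * s (e i)|} := by
    rw [hM, h1, hFG.norm_eq n a e]
  have hbdd : BddAbove {r : ℝ | ∃ s : G → ℝ, LipschitzWith 1 s ∧ s 0 = 0 ∧
      r = |∑ i, a i * s (e i)|} := by
    refine ⟨∑ i, |a i| * dist (e i) 0, ?_⟩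
    rintro r ⟨s, hs, hs0, rfl⟩
    calc |∑ i, a i * s (e i)| ≤ ∑ i, |a i * s (e i)| := Finset.abs_sum_le_sum_abs _ _
      _ ≤ ∑ i, |a i| * dist (e i) 0 := by
          refine Finset.sum_le_sum fun i _ => ?_
          rw [abs_mul]
          refine mul_le_mul_of_nonneg_left ?_ (abs_nonneg _)
          have := hs.dist_le_mul (e i) 0
          rw [hs0] at this
          simpa [Real.dist_eq] using this
  rw [h2]
  refine NormedSpace.norm_le_dual_bound ℝ _ (norm_nonneg _) fun f => ?_
  rcases eq_or_ne f 0 with rfl | hf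
  · simp [norm_nonneg, mul_nonneg (norm_nonneg _) (norm_nonneg _)]
  · set g : StrongDual ℝ G := ‖f‖⁻¹ • f with hg
    have hfne : ‖f‖ ≠ 0 := norm_ne_zero_iff.2 hf
    have hgnorm : ‖g‖ ≤ 1 := by
      rw [hg, norm_smul, norm_inv, norm_norm, inv_mul_cancel₀ hfne]
    have hlip : LipschitzWith 1 (g : G → ℝ) := by
      refine g.lipschitz.weaken ?_
      exact_mod_cast hgnorm
    have hmem : |∑ i, a i * g (e i)| ∈ {r : ℝ | ∃ s : G → ℝ, LipschitzWith 1 s ∧ s 0 = 0 ∧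
        r = |∑ i, a i * s (e i)|} := ⟨g, hlip, map_zero g, rfl⟩
    have hle : |∑ i, a i * g (e i)| ≤ M := hnorm ▸ le_csSup hbdd hmem
    have hgx : g (∑ i, a i • e i) = ∑ i, a i * g (e i) := by
      simp [map_sum, map_smul, smul_eq_mul]
    have hfg : f (∑ i, a i • e i) = ‖f‖ * g (∑ i, a i • e i) := by
      rw [hg, ContinuousLinearMap.smul_apply, smul_eq_mul, ← mul_assoc,
        mul_inv_cancel₀ hfne, one_mul]
    rw [Real.norm_eq_abs, hfg, abs_mul, abs_of_nonneg (norm_nonneg f), hgx]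
    rw [mul_comm M ‖f‖]
    exact mul_le_mul_of_nonneg_left hle (norm_nonneg f)

private lemma weakLp_nonneg {E : Type*} [NormedAddCommGroup E] [NormedSpace ℝ E]
    (p : ℝ) {m : ℕ} (x : Fin m → E) : 0 ≤ weakLp p x := by
  unfold weakLp
  refine Real.sSup_nonneg ?_
  rintro r ⟨φ, _, rfl⟩
  positivity

private lemma strongLp_nonneg {E : Type*} [NormedAddCommGroup E]
    (p : ℝ) {m : ℕ} (x : Fin m → E) : 0 ≤ strongLp p x := by
  unfold strongLp
  positivity

end Aux

private lemma exists_barycenter {G FG : Type*}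
    [NormedAddCommGroup G] [NormedSpace ℝ G]
    [NormedAddCommGroup FG] [NormedSpace ℝ FG] [CompleteSpace FG] {δG : G → FG}
    (hFG : IsFreeSpace G 0 FG δG) [CompleteSpace G] :
    ∃ βL : FG →L[ℝ] G, (∀ z, βL (δG z) = z) ∧ (∀ w, ‖βL w‖ ≤ ‖w‖) := by
  classical
  set t : (G →₀ ℝ) →ₗ[ℝ] FG := Finsupp.linearCombination ℝ δG with ht
  set u : (G →₀ ℝ) →ₗ[ℝ] G := Finsupp.linearCombination ℝ (id : G → G) with hu
  have htc : ∀ c : G →₀ ℝ, t c = ∑ g ∈ c.support, c g • δG g := fun c => by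
    rw [ht]; rw [Finsupp.linearCombination_apply, Finsupp.sum]
  have huc : ∀ c : G →₀ ℝ, u c = ∑ g ∈ c.support, c g • g := fun c => by
    rw [hu]; rw [Finsupp.linearCombination_apply, Finsupp.sum]; rfl
  have hkey : ∀ c : G →₀ ℝ, ‖u c‖ ≤ ‖t c‖ := fun c => by
    rw [htc, huc]; exact key_norm_bound hFG c
  have hker : LinearMap.ker t ≤ LinearMap.ker u := by
    intro c hc
    rw [LinearMap.mem_ker] at hc ⊢
    have h := hkey c
    rw [hc, norm_zero] at h
    exact norm_le_zero_iff.1 h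
  set βlin : ↥(LinearMap.range t) →ₗ[ℝ] G :=
    ((LinearMap.ker t).liftQ u hker).comp
      (t.quotKerEquivRange.symm : ↥(LinearMap.range t) →ₗ[ℝ] (G →₀ ℝ) ⧸ LinearMap.ker t)
    with hβlin
  have hβc : ∀ (c : G →₀ ℝ) (hc : t c ∈ LinearMap.range t), βlin ⟨t c, hc⟩ = u c := by
    intro c hc
    have h1 : t.quotKerEquivRange (Submodule.Quotient.mk c) = ⟨t c, hc⟩ := by
      apply Subtype.ext
      rw [LinearMap.quotKerEquivRange_apply_mk]
    have h2 : t.quotKerEquivRange.symm ⟨t c, hc⟩ = Submodule.Quotient.mk c := by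
      rw [← h1, LinearEquiv.symm_apply_apply]
    rw [hβlin]
    rw [LinearMap.comp_apply, LinearEquiv.coe_coe, h2, Submodule.liftQ_apply]
  have hβnorm : ∀ v : ↥(LinearMap.range t), ‖βlin v‖ ≤ ‖(v : FG)‖ := by
    rintro ⟨v, hv⟩
    obtain ⟨c, rfl⟩ := hv
    rw [hβc c ⟨c, rfl⟩]
    exact hkey c
  set βc : ↥(LinearMap.range t) →L[ℝ] G :=
    βlin.mkContinuous 1 (fun v => by simpa using hβnorm v) with hβcdef
  have hrange : LinearMap.range t = Submodule.span ℝ (Set.range δG) :=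
    Finsupp.range_linearCombination ℝ (v := δG)
  have hdense' : Dense ((LinearMap.range t : Submodule ℝ FG) : Set FG) := by
    rw [Submodule.dense_iff_topologicalClosure_eq_top, hrange]
    exact hFG.dense_span
  set eL : ↥(LinearMap.range t) →L[ℝ] FG := (LinearMap.range t).subtypeL with heL
  have hdense : DenseRange eL := by
    have h : Set.range eL = ((LinearMap.range t : Submodule ℝ FG) : Set FG) := by
      ext w
      constructor
      · rintro ⟨v, rfl⟩; exact v.2
      · intro hw; exact ⟨⟨w, hw⟩, rfl⟩
    rw [DenseRange, h]; exact hdense'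
  have hunif : IsUniformInducing eL :=
    isUniformEmbedding_subtype_val.isUniformInducing
  set βL : FG →L[ℝ] G := βc.extend eL with hβL
  have hext : ∀ v, βL (eL v) = βc v := fun v =>
    ContinuousLinearMap.extend_eq βc hdense hunif v
  have hle : ∀ w : FG, ‖βL w‖ ≤ ‖w‖ := by
    have hcl : IsClosed {w : FG | ‖βL w‖ ≤ ‖w‖} :=
      isClosed_le βL.continuous.norm continuous_norm
    intro w
    refine hdense.induction_on w hcl fun v => ?_
    show ‖βL (eL v)‖ ≤ ‖eL v‖
    rw [hext]
    calc ‖βc v‖ = ‖βlin v‖ := rfl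
      _ ≤ ‖(v : FG)‖ := hβnorm v
      _ = ‖eL v‖ := rfl
  refine ⟨βL, fun z => ?_, hle⟩
  have h1 : t (Finsupp.single z 1) = δG z := by
    rw [ht, Finsupp.linearCombination_single, one_smul]
  have hz : δG z ∈ LinearMap.range t := ⟨Finsupp.single z 1, h1⟩
  have h3 : βL (δG z) = βc ⟨δG z, hz⟩ := hext ⟨δG z, hz⟩
  have h4 : βc ⟨δG z, hz⟩ = βlin ⟨δG z, hz⟩ := rfl
  have h5 : (⟨δG z, hz⟩ : ↥(LinearMap.range t)) =
      ⟨t (Finsupp.single z 1), ⟨Finsupp.single z 1, rfl⟩⟩ := Subtype.ext h1.symm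
  rw [h3, h4, h5, hβc (Finsupp.single z 1) ⟨Finsupp.single z 1, rfl⟩, hu,
    Finsupp.linearCombination_single, one_smul, id]

/-- Proposition 2.3: every MS-Lipschitz `p`-summing operator from a pointed
metric space `Y` into a Banach space `G` is strictly Lipschitz `p`-summing. -/
theorem msLipPSumming_implies_strictlyLipPSumming
    {Y G FY FG : Type*} [MetricSpace Y] [Inhabited Y]
    [NormedAddCommGroup G] [NormedSpace ℝ G] [CompleteSpace G]
    [NormedAddCommGroup FY] [NormedSpace ℝ FY] [CompleteSpace FY]
    [NormedAddCommGroup FG] [NormedSpace ℝ FG] [CompleteSpace FG]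
    {δY : Y → FY} {δG : G → FG}
    (hFY : IsFreeSpace Y default FY δY) (hFG : IsFreeSpace G 0 FG δG)
    {p q : ℝ} (hpq : p.HolderConjugate q)
    (T : Y → G) (hTlip : ∃ K, LipschitzWith K T) (hT0 : T default = 0)
    (hMS : MSLipPSumming p q δY δG T) :
    ∃ K > 0, ∀ (k : ℕ) (x y : Fin k → Y) (h : Fin k → StrongDual ℝ G),
      |∑ l, (h l (T (x l)) - h l (T (y l)))| ≤
        K * dpNorm p q (∑ l, (δY (x l) - δY (y l)) ⊗ₜ[ℝ] h l) := by
  classical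
  obtain ⟨βL, hβδ, hβle⟩ := exists_barycenter hFG
  set Lmap : StrongDual ℝ G →ₗ[ℝ] StrongDual ℝ FG :=
    { toFun := fun h => h.comp βL
      map_add' := fun a b => by ext w; simp
      map_smul' := fun r a => by ext w; simp } with hLmap
  have hLapp : ∀ (h : StrongDual ℝ G) (w : FG), Lmap h w = h (βL w) := fun h w => rfl
  have hLnorm : ∀ h : StrongDual ℝ G, ‖Lmap h‖ ≤ ‖h‖ := by
    intro h
    refine ContinuousLinearMap.opNorm_le_bound _ (norm_nonneg h) fun w => ?_
    calc ‖(Lmap h) w‖ = ‖h (βL w)‖ := rfl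
      _ ≤ ‖h‖ * ‖βL w‖ := h.le_opNorm _
      _ ≤ ‖h‖ * ‖w‖ := mul_le_mul_of_nonneg_left (hβle w) (norm_nonneg h)
  have hq0 : (0:ℝ) ≤ q := hpq.symm.nonneg
  obtain ⟨K, hK, hineq⟩ := hMS
  refine ⟨K, hK, fun k x y h => ?_⟩
  have hLHS : ∑ l, (h l (T (x l)) - h l (T (y l))) =
      ∑ l, ((Lmap (h l)) (δG (T (x l))) - (Lmap (h l)) (δG (T (y l)))) := by
    refine Finset.sum_congr rfl fun l _ => ?_
    rw [hLapp, hLapp, hβδ, hβδ]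
  have hmain := hineq k x y (fun l => Lmap (h l))
  rw [hLHS]
  refine le_trans hmain ?_
  refine mul_le_mul_of_nonneg_left ?_ (le_of_lt hK)
  set z : TensorProduct ℝ FY (StrongDual ℝ G) := ∑ l, (δY (x l) - δY (y l)) ⊗ₜ[ℝ] h l with hz
  set Φ : TensorProduct ℝ FY (StrongDual ℝ G) →ₗ[ℝ] TensorProduct ℝ FY (StrongDual ℝ FG) :=
    LinearMap.lTensor FY Lmap with hΦ
  have hzF : ∑ l, (δY (x l) - δY (y l)) ⊗ₜ[ℝ] (Lmap (h l)) = Φ z := by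
    rw [hz, hΦ, map_sum]
    exact Finset.sum_congr rfl fun l _ => (LinearMap.lTensor_tmul FY Lmap _ _).symm
  rw [show (∑ l, (δY (x l) - δY (y l)) ⊗ₜ[ℝ] (fun l => Lmap (h l)) l) = Φ z from hzF]
  unfold dpNorm
  refine le_csInf ⟨weakLp p (fun l => δY (x l) - δY (y l)) * strongLp q h,
    k, fun l => δY (x l) - δY (y l), h, hz, rfl⟩ ?_
  rintro r ⟨m, nn, g, hrep, rfl⟩
  have hmem : weakLp p nn * strongLp q (fun j => Lmap (g j)) ∈
      {r : ℝ | ∃ (m' : ℕ) (n' : Fin m' → FY) (h' : Fin m' → StrongDual ℝ FG),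
        Φ z = ∑ j, n' j ⊗ₜ[ℝ] h' j ∧ r = weakLp p n' * strongLp q h'} := by
    refine ⟨m, nn, fun j => Lmap (g j), ?_, rfl⟩
    rw [hrep, map_sum]
    exact Finset.sum_congr rfl fun j _ => LinearMap.lTensor_tmul FY Lmap _ _
  have hbdd : BddBelow {r : ℝ | ∃ (m' : ℕ) (n' : Fin m' → FY) (h' : Fin m' → StrongDual ℝ FG),
      Φ z = ∑ j, n' j ⊗ₜ[ℝ] h' j ∧ r = weakLp p n' * strongLp q h'} := by
    refine ⟨0, ?_⟩
    rintro r ⟨m', n', h', _, rfl⟩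
    exact mul_nonneg (weakLp_nonneg _ _) (strongLp_nonneg _ _)
  refine le_trans (csInf_le hbdd hmem) ?_
  refine mul_le_mul_of_nonneg_left ?_ (weakLp_nonneg _ _)
  unfold strongLp
  refine Real.rpow_le_rpow (by positivity) ?_ (one_div_nonneg.2 hq0)
  refine Finset.sum_le_sum fun j _ => ?_
  exact Real.rpow_le_rpow (norm_nonneg _) (hLnorm (g j)) hq0
end

section
/- Let Y, W be pointed metric spaces and T : Y → W Lipschitz with T(0)=0, 1 < p < ∞. The following are equivalent: (1) T is MS-Lipschitz p-nuclear; (2) there is K > 0 such that for all finite families (x_j^i), (y_j^i) in Y and (f_j) in W^#: |Σ_{j=1}^{m₁} Σ_{i=1}^{m₂} f_j(T x_j^i) − f_j(T y_j^i)| ≤ K sup_{s ∈ B_{Y^#}} (Σ_j |Σ_i s(x_j^i) − s(y_j^i)|^p)^{1/p} · ‖(f_j)‖_{ℓ_{p*}^{m₁,w}(W^#)}; (3) the linearization T̃ : F(Y) → F(W) is (Cohen) p-nuclear. -/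
open scoped TensorProduct
open NormedSpace Finset

noncomputable section MSAuxSection

open Finset Real

namespace MSAux

variable {E : Type*} [NormedAddCommGroup E] [NormedSpace ℝ E]

lemma lp_mono {p : ℝ} (hp : 0 < p) {m : ℕ} {a b : Fin m → ℝ} (ha : ∀ j, 0 ≤ a j)
    (hab : ∀ j, a j ≤ b j) :
    (∑ j, a j ^ p) ^ (1 / p) ≤ (∑ j, b j ^ p) ^ (1 / p) :=
  Real.rpow_le_rpow (Finset.sum_nonneg fun j _ => Real.rpow_nonneg (ha j) p)
    (Finset.sum_le_sum fun j _ => Real.rpow_le_rpow (ha j) (hab j) hp.le)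
    (by positivity)

lemma weakLp_zero_mem {p : ℝ} (hp : 0 < p) {m : ℕ} (x : Fin m → E) :
    (0:ℝ) ∈ {r : ℝ | ∃ φ : StrongDual ℝ E, ‖φ‖ ≤ 1 ∧
      r = (∑ j, |φ (x j)| ^ p) ^ (1 / p)} := by
  refine ⟨0, by simp, ?_⟩
  have h : ∀ j : Fin m, |(0 : StrongDual ℝ E) (x j)| ^ p = 0 := fun j => by
    simp [Real.zero_rpow hp.ne']
  rw [Finset.sum_congr rfl fun j _ => h j, Finset.sum_const_zero,
    Real.zero_rpow (one_div_ne_zero hp.ne')]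

lemma weakLp_bddAbove {p : ℝ} (hp : 0 < p) {m : ℕ} (x : Fin m → E) :
    BddAbove {r : ℝ | ∃ φ : StrongDual ℝ E, ‖φ‖ ≤ 1 ∧
      r = (∑ j, |φ (x j)| ^ p) ^ (1 / p)} := by
  refine ⟨(∑ j, ‖x j‖ ^ p) ^ (1 / p), ?_⟩
  rintro r ⟨φ, hφ, rfl⟩
  refine lp_mono hp (fun j => abs_nonneg _) (fun j => ?_)
  calc |φ (x j)| = ‖φ (x j)‖ := (Real.norm_eq_abs _).symm
    _ ≤ ‖φ‖ * ‖x j‖ := φ.le_opNorm _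
    _ ≤ 1 * ‖x j‖ := mul_le_mul_of_nonneg_right hφ (norm_nonneg _)
    _ = ‖x j‖ := one_mul _

lemma le_weakLp {p : ℝ} (hp : 0 < p) {m : ℕ} (x : Fin m → E) {φ : StrongDual ℝ E}
    (hφ : ‖φ‖ ≤ 1) :
    (∑ j, |φ (x j)| ^ p) ^ (1 / p) ≤ weakLp p x :=
  le_csSup (weakLp_bddAbove hp x) ⟨φ, hφ, rfl⟩

lemma weakLp_nonneg {p : ℝ} (hp : 0 < p) {m : ℕ} (x : Fin m → E) : 0 ≤ weakLp p x :=
  le_csSup (weakLp_bddAbove hp x) (weakLp_zero_mem hp x)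

lemma weakLp_le {p : ℝ} (hp : 0 < p) {m : ℕ} {x : Fin m → E} {C : ℝ}
    (h : ∀ φ : StrongDual ℝ E, ‖φ‖ ≤ 1 → (∑ j, |φ (x j)| ^ p) ^ (1 / p) ≤ C) :
    weakLp p x ≤ C := by
  refine csSup_le ⟨0, weakLp_zero_mem hp x⟩ ?_
  rintro r ⟨φ, hφ, rfl⟩
  exact h φ hφ

lemma lp_smul_calc {p : ℝ} (hp : 0 < p) {m : ℕ} {c : ℝ} (hc : 0 ≤ c) (a : Fin m → ℝ)
    (ha : ∀ j, 0 ≤ a j) :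
    (∑ j, (c * a j) ^ p) ^ (1 / p) = c * (∑ j, a j ^ p) ^ (1 / p) := by
  have h1 : ∀ j, (c * a j) ^ p = c ^ p * a j ^ p := fun j => Real.mul_rpow hc (ha j)
  have hcp : (c ^ p) ^ (1 / p) = c := by
    rw [← Real.rpow_mul hc, mul_one_div_cancel hp.ne', Real.rpow_one]
  rw [Finset.sum_congr rfl fun j _ => h1 j, ← Finset.mul_sum,
    Real.mul_rpow (Real.rpow_nonneg hc p)
      (Finset.sum_nonneg fun j _ => Real.rpow_nonneg (ha j) p), hcp]

lemma weakLp_smul {p : ℝ} (hp : 0 < p) {m : ℕ} {c : ℝ} (hc : 0 < c) (x : Fin m → E) :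
    weakLp p (fun j => c • x j) = c * weakLp p x := by
  have key : ∀ φ : StrongDual ℝ E, (∑ j, |φ (c • x j)| ^ p) ^ (1 / p)
      = c * (∑ j, |φ (x j)| ^ p) ^ (1 / p) := by
    intro φ
    have h1 : ∀ j, |φ (c • x j)| = c * |φ (x j)| := fun j => by
      rw [map_smul, smul_eq_mul, abs_mul, abs_of_nonneg hc.le]
    rw [show (∑ j, |φ (c • x j)| ^ p) = ∑ j, (c * |φ (x j)|) ^ p from
      Finset.sum_congr rfl fun j _ => by rw [h1 j]]
    exact lp_smul_calc hp hc.le _ (fun j => abs_nonneg _)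
  apply le_antisymm
  · refine weakLp_le hp fun φ hφ => ?_
    rw [key φ]
    exact mul_le_mul_of_nonneg_left (le_weakLp hp x hφ) hc.le
  · have h2 : weakLp p x ≤ c⁻¹ * weakLp p (fun j => c • x j) := by
      refine weakLp_le hp fun φ hφ => ?_
      have h3 := le_weakLp hp (fun j => c • x j) hφ
      rw [key φ] at h3
      rw [le_inv_mul_iff₀ hc]
      exact h3
    calc c * weakLp p x ≤ c * (c⁻¹ * weakLp p (fun j => c • x j)) :=
          mul_le_mul_of_nonneg_left h2 hc.le
      _ = weakLp p (fun j => c • x j) := by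
          rw [← mul_assoc, mul_inv_cancel₀ hc.ne', one_mul]

lemma weakLp_dom {p : ℝ} (hp : 0 < p) {m : ℕ} (x : Fin m → E) (t : Fin m → ℝ)
    (ht : ∀ j, |t j| ≤ 1) :
    weakLp p (fun j => t j • x j) ≤ weakLp p x := by
  refine weakLp_le hp fun φ hφ => ?_
  refine le_trans (lp_mono hp (fun j => abs_nonneg _) (fun j => ?_)) (le_weakLp hp x hφ)
  rw [map_smul, smul_eq_mul, abs_mul]
  exact mul_le_of_le_one_left (abs_nonneg _) (ht j)

lemma strongLp_le {p : ℝ} (hp : 0 < p) {m : ℕ} (x : Fin m → E) {ε : ℝ} (hε : 0 ≤ ε)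
    (h : ∀ j, ‖x j‖ ≤ ε) : strongLp p x ≤ (m : ℝ) ^ (1 / p) * ε := by
  have h1 : strongLp p x ≤ (∑ _j : Fin m, ε ^ p) ^ (1 / p) :=
    lp_mono hp (fun j => norm_nonneg _) h
  refine h1.trans ?_
  rw [Finset.sum_const, Finset.card_univ, Fintype.card_fin, nsmul_eq_mul,
    Real.mul_rpow (Nat.cast_nonneg m) (Real.rpow_nonneg hε p)]
  have : (ε ^ p) ^ (1 / p) = ε := by
    rw [← Real.rpow_mul hε, mul_one_div_cancel hp.ne', Real.rpow_one]
  rw [this]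

lemma weakLp_le_add {p : ℝ} (hp1 : 1 ≤ p) {m : ℕ} (x v : Fin m → E) :
    weakLp p x ≤ weakLp p v + strongLp p (fun j => x j - v j) := by
  have hp : 0 < p := lt_of_lt_of_le one_pos hp1
  refine weakLp_le hp fun φ hφ => ?_
  have h1 : (∑ j, |φ (x j)| ^ p) ^ (1 / p)
      = (∑ j, |φ (v j) + φ (x j - v j)| ^ p) ^ (1 / p) := by
    congr 1
    refine Finset.sum_congr rfl fun j _ => ?_
    congr 2
    rw [map_sub]
    ring
  rw [h1]
  refine le_trans (Real.Lp_add_le Finset.univ _ _ hp1) ?_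
  refine add_le_add (le_weakLp hp v hφ) ?_
  refine lp_mono hp (fun j => abs_nonneg _) (fun j => ?_)
  calc |φ (x j - v j)| = ‖φ (x j - v j)‖ := (Real.norm_eq_abs _).symm
    _ ≤ ‖φ‖ * ‖x j - v j‖ := φ.le_opNorm _
    _ ≤ 1 * ‖x j - v j‖ := mul_le_mul_of_nonneg_right hφ (norm_nonneg _)
    _ = ‖x j - v j‖ := one_mul _

lemma norm_sum_smul_le {p q : ℝ} (hpq : Real.HolderConjugate p q) {m : ℕ} (b : Fin m → ℝ)
    (n : Fin m → E) :
    ‖∑ j, b j • n j‖ ≤ (∑ j, |b j| ^ q) ^ (1 / q) * weakLp p n := by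
  obtain ⟨g, hg1, hgx⟩ := exists_dual_vector'' ℝ (∑ j, b j • n j)
  have hg : g (∑ j, b j • n j) = ∑ j, b j * g (n j) := by
    rw [map_sum]
    exact Finset.sum_congr rfl fun j _ => by rw [map_smul, smul_eq_mul]
  have h0 : ‖∑ j, b j • n j‖ = ∑ j, b j * g (n j) := by
    rw [← hg]; exact_mod_cast hgx.symm
  rw [h0]
  calc ∑ j, b j * g (n j)
      ≤ (∑ j, |b j| ^ q) ^ (1 / q) * (∑ j, |g (n j)| ^ p) ^ (1 / p) :=
        Real.inner_le_Lp_mul_Lq Finset.univ b (fun j => g (n j)) hpq.symm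
    _ ≤ (∑ j, |b j| ^ q) ^ (1 / q) * weakLp p n := by
        refine mul_le_mul_of_nonneg_left (le_weakLp hpq.pos n hg1) ?_
        exact Real.rpow_nonneg
          (Finset.sum_nonneg fun j _ => Real.rpow_nonneg (abs_nonneg _) q) _


section FreeSpace

variable {Y : Type*} [MetricSpace Y] [Inhabited Y] {FY : Type*} [NormedAddCommGroup FY]
  [NormedSpace ℝ FY] [CompleteSpace FY] {δY : Y → FY}

lemma fs_bddAbove (n : ℕ) (a : Fin n → ℝ) (x : Fin n → Y) :
    BddAbove {r : ℝ | ∃ s : Y → ℝ, LipschitzWith 1 s ∧ s default = 0 ∧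
      r = |∑ i, a i * s (x i)|} := by
  refine ⟨∑ i, |a i| * dist (x i) default, ?_⟩
  rintro r ⟨s, hs, hs0, rfl⟩
  calc |∑ i, a i * s (x i)| ≤ ∑ i, |a i * s (x i)| := Finset.abs_sum_le_sum_abs _ _
    _ ≤ ∑ i, |a i| * dist (x i) default := by
        refine Finset.sum_le_sum fun i _ => ?_
        rw [abs_mul]
        refine mul_le_mul_of_nonneg_left ?_ (abs_nonneg _)
        have h1 : |s (x i)| = dist (s (x i)) (s default) := by
          rw [hs0, Real.dist_eq, sub_zero]
        rw [h1]
        simpa using hs.dist_le_mul (x i) default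

lemma fs_eval_le (hFY : IsFreeSpace Y default FY δY) (s : Y → ℝ) (hs : LipschitzWith 1 s)
    (hs0 : s default = 0) (n : ℕ) (a : Fin n → ℝ) (x : Fin n → Y) :
    |∑ i, a i * s (x i)| ≤ ‖∑ i, a i • δY (x i)‖ := by
  rw [hFY.norm_eq]
  exact le_csSup (fs_bddAbove n a x) ⟨s, hs, hs0, rfl⟩

lemma S_nonempty (p : ℝ) {m₁ m₂ : ℕ} (x y : Fin m₁ → Fin m₂ → Y) :
    Set.Nonempty {r : ℝ | ∃ s : Y → ℝ, LipschitzWith 1 s ∧ s default = 0 ∧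
      r = (∑ j, |∑ i, (s (x j i) - s (y j i))| ^ p) ^ (1 / p)} :=
  ⟨_, ⟨fun _ => 0, (LipschitzWith.const 0).weaken zero_le_one, rfl, rfl⟩⟩

lemma S_bddAbove {p : ℝ} (hp : 0 < p) {m₁ m₂ : ℕ} (x y : Fin m₁ → Fin m₂ → Y) :
    BddAbove {r : ℝ | ∃ s : Y → ℝ, LipschitzWith 1 s ∧ s default = 0 ∧
      r = (∑ j, |∑ i, (s (x j i) - s (y j i))| ^ p) ^ (1 / p)} := by
  refine ⟨(∑ j, (∑ i, dist (x j i) (y j i)) ^ p) ^ (1 / p), ?_⟩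
  rintro r ⟨s, hs, hs0, rfl⟩
  refine lp_mono hp (fun j => abs_nonneg _) (fun j => ?_)
  calc |∑ i, (s (x j i) - s (y j i))| ≤ ∑ i, |s (x j i) - s (y j i)| :=
        Finset.abs_sum_le_sum_abs _ _
    _ ≤ ∑ i, dist (x j i) (y j i) := by
        refine Finset.sum_le_sum fun i _ => ?_
        rw [← Real.dist_eq]
        simpa using hs.dist_le_mul (x j i) (y j i)

lemma S_eq (hFY : IsFreeSpace Y default FY δY) {p q : ℝ} (hpq : Real.HolderConjugate p q)
    {m₁ m₂ : ℕ} (x y : Fin m₁ → Fin m₂ → Y) :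
    sSup {r : ℝ | ∃ s : Y → ℝ, LipschitzWith 1 s ∧ s default = 0 ∧
        r = (∑ j, |∑ i, (s (x j i) - s (y j i))| ^ p) ^ (1 / p)}
      = weakLp p (fun j => ∑ i, (δY (x j i) - δY (y j i))) := by
  classical
  have hp := hpq.pos
  apply le_antisymm
  · refine csSup_le (S_nonempty p x y) ?_
    rintro r ⟨s, hs, hs0, rfl⟩
    set n : Fin m₁ → FY := fun j => ∑ i, (δY (x j i) - δY (y j i)) with hn
    set t : Fin m₁ → ℝ := fun j => ∑ i, (s (x j i) - s (y j i)) with ht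
    -- key: for all coefficients b
    have key : ∀ b : Fin m₁ → ℝ, |∑ j, b j * t j| ≤ ‖∑ j, b j • n j‖ := by
      intro b
      set e := Fintype.equivFin (Fin m₁ × Fin m₂ × Bool) with he
      set N := Fintype.card (Fin m₁ × Fin m₂ × Bool) with hN
      set aa : Fin N → ℝ :=
        fun k => if (e.symm k).2.2 then b (e.symm k).1 else -b (e.symm k).1 with haa
      set zz : Fin N → Y :=
        fun k => if (e.symm k).2.2 then x (e.symm k).1 (e.symm k).2.1
          else y (e.symm k).1 (e.symm k).2.1 with hzz
      have h1 : ∑ k, aa k * s (zz k) = ∑ j, b j * t j := by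
        rw [← Equiv.sum_comp e (fun k => aa k * s (zz k))]
        simp only [haa, hzz, Equiv.symm_apply_apply]
        rw [Fintype.sum_prod_type]
        refine Finset.sum_congr rfl fun j _ => ?_
        rw [Fintype.sum_prod_type]
        have : ∀ i : Fin m₂, ∑ c : Bool,
            (if c then b j else -b j) * s (if c then x j i else y j i)
            = b j * (s (x j i) - s (y j i)) := by
          intro i
          rw [Fintype.sum_bool]
          norm_num
          ring
        rw [Finset.sum_congr rfl fun i _ => this i, ← Finset.mul_sum, ht]
      have h2 : ∑ k, aa k • δY (zz k) = ∑ j, b j • n j := by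
        rw [← Equiv.sum_comp e (fun k => aa k • δY (zz k))]
        simp only [haa, hzz, Equiv.symm_apply_apply]
        rw [Fintype.sum_prod_type]
        refine Finset.sum_congr rfl fun j _ => ?_
        rw [Fintype.sum_prod_type]
        have : ∀ i : Fin m₂, ∑ c : Bool,
            (if c then b j else -b j) • δY (if c then x j i else y j i)
            = b j • (δY (x j i) - δY (y j i)) := by
          intro i
          rw [Fintype.sum_bool]
          norm_num [smul_sub]
          abel
        rw [Finset.sum_congr rfl fun i _ => this i, ← Finset.smul_sum, hn]
      calc |∑ j, b j * t j| = |∑ k, aa k * s (zz k)| := by rw [h1]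
        _ ≤ ‖∑ k, aa k • δY (zz k)‖ := fs_eval_le hFY s hs hs0 N aa zz
        _ = ‖∑ j, b j • n j‖ := by rw [h2]
    -- construct the dual coefficients
    by_cases hzero : ∑ j, |t j| ^ p = 0
    · rw [hzero, Real.zero_rpow (one_div_ne_zero hp.ne')]
      exact weakLp_nonneg hp _
    · have hpos : 0 < ∑ j, |t j| ^ p :=
        lt_of_le_of_ne (Finset.sum_nonneg fun j _ => Real.rpow_nonneg (abs_nonneg _) p)
          (Ne.symm hzero)
      set A := (∑ j, |t j| ^ p) ^ (1 / p) with hA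
      have hApos : 0 < A := Real.rpow_pos_of_pos hpos _
      set b : Fin m₁ → ℝ :=
        fun j => (if 0 ≤ t j then 1 else -1) * |t j| ^ (p - 1) * A ^ (1 - p) with hb
      have hbt : ∀ j, b j * t j = |t j| ^ p * A ^ (1 - p) := by
        intro j
        have h1 : (if 0 ≤ t j then (1:ℝ) else -1) * t j = |t j| := by
          split_ifs with h
          · rw [one_mul, abs_of_nonneg h]
          · rw [neg_one_mul, abs_of_neg (lt_of_not_ge h)]
        have h2 : |t j| ^ (p - 1) * |t j| = |t j| ^ p := by
          nth_rewrite 2 [← Real.rpow_one |t j|]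
          rw [← Real.rpow_add' (abs_nonneg _) (by simp [hp.ne'] : p - 1 + 1 ≠ 0)]
          norm_num
        calc b j * t j
            = |t j| ^ (p - 1) * ((if 0 ≤ t j then (1:ℝ) else -1) * t j) * A ^ (1 - p) := by
              rw [hb]; ring
          _ = |t j| ^ (p - 1) * |t j| * A ^ (1 - p) := by rw [h1]
          _ = |t j| ^ p * A ^ (1 - p) := by rw [h2]
      have hAp : A ^ p = ∑ j, |t j| ^ p := by
        rw [hA, ← Real.rpow_mul hpos.le, one_div_mul_cancel hp.ne', Real.rpow_one]
      have hsumbt : ∑ j, b j * t j = A := by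
        rw [Finset.sum_congr rfl fun j _ => hbt j, ← Finset.sum_mul, ← hAp,
          ← Real.rpow_add hApos]
        norm_num
      have habs : ∀ j, |b j| = |t j| ^ (p - 1) * A ^ (1 - p) := by
        intro j
        rw [hb]
        rw [abs_mul, abs_mul]
        have h3 : |(if 0 ≤ t j then (1:ℝ) else -1)| = 1 := by split_ifs <;> simp
        rw [h3, one_mul, abs_of_nonneg (Real.rpow_nonneg (abs_nonneg _) _),
          abs_of_nonneg (Real.rpow_nonneg hApos.le _)]
      have hbq : ∑ j, |b j| ^ q = 1 := by
        have step : ∀ j, |b j| ^ q = |t j| ^ p * A ^ (-p) := by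
          intro j
          rw [habs j, Real.mul_rpow (Real.rpow_nonneg (abs_nonneg _) _)
            (Real.rpow_nonneg hApos.le _), ← Real.rpow_mul (abs_nonneg _),
            ← Real.rpow_mul hApos.le, hpq.sub_one_mul_conj]
          congr 1
          have h4 : (1 - p) * q = -((p - 1) * q) := by ring
          rw [h4, hpq.sub_one_mul_conj]
        rw [Finset.sum_congr rfl fun j _ => step j, ← Finset.sum_mul, ← hAp,
          ← Real.rpow_add hApos]
        norm_num
      have hfinal : A ≤ weakLp p n := by
        calc A = ∑ j, b j * t j := hsumbt.symm
          _ ≤ |∑ j, b j * t j| := le_abs_self _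
          _ ≤ ‖∑ j, b j • n j‖ := key b
          _ ≤ (∑ j, |b j| ^ q) ^ (1 / q) * weakLp p n := norm_sum_smul_le hpq b n
          _ = weakLp p n := by rw [hbq, Real.one_rpow, one_mul]
      exact hfinal
  · refine weakLp_le hp fun φ hφ => ?_
    set s : Y → ℝ := fun z => φ (δY z) with hsdef
    have hs : LipschitzWith 1 s := by
      refine LipschitzWith.of_dist_le_mul fun a b => ?_
      have h5 : s a - s b = φ (δY a - δY b) := by rw [hsdef]; simp [map_sub]
      rw [Real.dist_eq, h5]
      calc |φ (δY a - δY b)| = ‖φ (δY a - δY b)‖ := (Real.norm_eq_abs _).symm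
        _ ≤ ‖φ‖ * ‖δY a - δY b‖ := φ.le_opNorm _
        _ ≤ 1 * ‖δY a - δY b‖ := mul_le_mul_of_nonneg_right hφ (norm_nonneg _)
        _ = ↑(1 : NNReal) * dist a b := by rw [hFY.isometry]; norm_num
    have hs0 : s default = 0 := by rw [hsdef]; simp [hFY.map_base]
    refine le_csSup (S_bddAbove hp x y) ⟨s, hs, hs0, ?_⟩
    congr 1
    refine Finset.sum_congr rfl fun j _ => ?_
    congr 2
    rw [map_sum]
    exact Finset.sum_congr rfl fun i _ => by rw [map_sub]

end FreeSpace

section Pairing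

variable {FY FW : Type*} [NormedAddCommGroup FY] [NormedSpace ℝ FY]
  [NormedAddCommGroup FW] [NormedSpace ℝ FW]

def pairT (Tt : FY →L[ℝ] FW) : TensorProduct ℝ FY (StrongDual ℝ FW) →ₗ[ℝ] ℝ :=
  TensorProduct.lift
    { toFun := fun n =>
        { toFun := fun h => h (Tt n)
          map_add' := fun h₁ h₂ => by simp
          map_smul' := fun c h => by simp }
      map_add' := fun n₁ n₂ => by
        ext h
        simp
      map_smul' := fun c n => by
        ext h
        simp }

lemma pairT_sum (Tt : FY →L[ℝ] FW) {m : ℕ} (n : Fin m → FY)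
    (h : Fin m → StrongDual ℝ FW) :
    pairT Tt (∑ j, n j ⊗ₜ[ℝ] h j) = ∑ j, h j (Tt (n j)) := by
  rw [map_sum]
  refine Finset.sum_congr rfl fun j _ => ?_
  rw [pairT, TensorProduct.lift.tmul]
  rfl

lemma wp_bddBelow {p q : ℝ} (hp : 0 < p) (hq : 0 < q)
    (z : TensorProduct ℝ FY (StrongDual ℝ FW)) :
    BddBelow {r : ℝ | ∃ (m : ℕ) (n : Fin m → FY) (h : Fin m → StrongDual ℝ FW),
      z = ∑ j, n j ⊗ₜ[ℝ] h j ∧ r = weakLp p n * weakLp q h} := by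
  refine ⟨0, ?_⟩
  rintro r ⟨m, n, h, -, rfl⟩
  exact mul_nonneg (weakLp_nonneg hp n) (weakLp_nonneg hq h)

end Pairing

section MainLemmas

variable {Y W FY FW : Type*} [MetricSpace Y] [Inhabited Y] [MetricSpace W] [Inhabited W]
  [NormedAddCommGroup FY] [NormedSpace ℝ FY] [CompleteSpace FY]
  [NormedAddCommGroup FW] [NormedSpace ℝ FW] [CompleteSpace FW]
  {δY : Y → FY} {δW : W → FW}

lemma p3_to_p1 {p q : ℝ} (hpq : Real.HolderConjugate p q) (T : Y → W) (Tt : FY →L[ℝ] FW)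
    (hTt : ∀ x, Tt (δY x) = δW (T x)) (h3 : IsPNuclear p q Tt) :
    MSLipPNuclear p q δY δW T := by
  obtain ⟨K, hK, hN⟩ := h3
  refine ⟨K, hK, fun k x y f => ?_⟩
  have hLHS : ∑ l, (f l (δW (T (x l))) - f l (δW (T (y l))))
      = pairT Tt (∑ l, (δY (x l) - δY (y l)) ⊗ₜ[ℝ] f l) := by
    rw [pairT_sum]
    refine Finset.sum_congr rfl fun l _ => ?_
    rw [map_sub, hTt, hTt, map_sub]
  rw [hLHS]
  set z := ∑ l, (δY (x l) - δY (y l)) ⊗ₜ[ℝ] f l with hz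
  have hne : Set.Nonempty {r : ℝ | ∃ (m : ℕ) (n : Fin m → FY)
      (h : Fin m → StrongDual ℝ FW),
      z = ∑ j, n j ⊗ₜ[ℝ] h j ∧ r = weakLp p n * weakLp q h} :=
    ⟨_, k, fun l => δY (x l) - δY (y l), f, rfl, rfl⟩
  have hmain : ∀ r ∈ {r : ℝ | ∃ (m : ℕ) (n : Fin m → FY)
      (h : Fin m → StrongDual ℝ FW),
      z = ∑ j, n j ⊗ₜ[ℝ] h j ∧ r = weakLp p n * weakLp q h},
      |pairT Tt z| / K ≤ r := by
    rintro r ⟨mm, n, h, hzz, rfl⟩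
    rw [div_le_iff₀ hK]
    rw [hzz, pairT_sum]
    calc |∑ j, h j (Tt (n j))| ≤ ∑ j, |h j (Tt (n j))| := Finset.abs_sum_le_sum_abs _ _
      _ ≤ K * weakLp p n * weakLp q h := hN mm n h
      _ = weakLp p n * weakLp q h * K := by ring
  have hfin := le_csInf hne hmain
  rw [wpNorm]
  calc |pairT Tt z| ≤ _ * K := (div_le_iff₀ hK).1 hfin
    _ = K * _ := mul_comm _ _

lemma p1_to_p2 (hFY : IsFreeSpace Y default FY δY) {p q : ℝ}
    (hpq : Real.HolderConjugate p q) (T : Y → W) (Tt : FY →L[ℝ] FW)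
    (hTt : ∀ x, Tt (δY x) = δW (T x))
    (h1 : MSLipPNuclear p q δY δW T) :
    ∃ K > 0, ∀ (m₁ m₂ : ℕ) (x y : Fin m₁ → Fin m₂ → Y) (f : Fin m₁ → StrongDual ℝ FW),
      |∑ j, ∑ i, (f j (δW (T (x j i))) - f j (δW (T (y j i))))| ≤
        K * sSup {r : ℝ | ∃ s : Y → ℝ, LipschitzWith 1 s ∧ s default = 0 ∧
            r = (∑ j, |∑ i, (s (x j i) - s (y j i))| ^ p) ^ (1 / p)} * weakLp q f := by
  obtain ⟨K, hK, hMS⟩ := h1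
  have hp := hpq.pos
  have hq := hpq.symm.pos
  refine ⟨K, hK, fun m₁ m₂ x y f => ?_⟩
  set e : Fin m₁ × Fin m₂ ≃ Fin (m₁ * m₂) := finProdFinEquiv with he
  set x' : Fin (m₁ * m₂) → Y := fun l => x (e.symm l).1 (e.symm l).2 with hx'
  set y' : Fin (m₁ * m₂) → Y := fun l => y (e.symm l).1 (e.symm l).2 with hy'
  set f' : Fin (m₁ * m₂) → StrongDual ℝ FW := fun l => f (e.symm l).1 with hf'
  have h2 := hMS (m₁ * m₂) x' y' f'
  have hL : ∑ l, (f' l (δW (T (x' l))) - f' l (δW (T (y' l))))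
      = ∑ j, ∑ i, (f j (δW (T (x j i))) - f j (δW (T (y j i)))) := by
    rw [← Equiv.sum_comp e (fun l => f' l (δW (T (x' l))) - f' l (δW (T (y' l))))]
    simp only [hx', hy', hf', Equiv.symm_apply_apply]
    rw [Fintype.sum_prod_type]
  have hz : (∑ l, (δY (x' l) - δY (y' l)) ⊗ₜ[ℝ] f' l)
      = ∑ j, (∑ i, (δY (x j i) - δY (y j i))) ⊗ₜ[ℝ] f j := by
    rw [← Equiv.sum_comp e (fun l => (δY (x' l) - δY (y' l)) ⊗ₜ[ℝ] f' l)]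
    simp only [hx', hy', hf', Equiv.symm_apply_apply]
    rw [Fintype.sum_prod_type]
    refine Finset.sum_congr rfl fun j _ => ?_
    exact (TensorProduct.sum_tmul Finset.univ (fun i => δY (x j i) - δY (y j i)) (f j)).symm
  rw [hL, hz] at h2
  refine h2.trans ?_
  have h3 : wpNorm p q (∑ j, (∑ i, (δY (x j i) - δY (y j i))) ⊗ₜ[ℝ] f j)
      ≤ weakLp p (fun j => ∑ i, (δY (x j i) - δY (y j i))) * weakLp q f :=
    csInf_le (wp_bddBelow hp hq _) ⟨m₁, _, f, rfl, rfl⟩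
  calc K * wpNorm p q (∑ j, (∑ i, (δY (x j i) - δY (y j i))) ⊗ₜ[ℝ] f j)
      ≤ K * (weakLp p (fun j => ∑ i, (δY (x j i) - δY (y j i))) * weakLp q f) :=
        mul_le_mul_of_nonneg_left h3 hK.le
    _ = K * sSup {r : ℝ | ∃ s : Y → ℝ, LipschitzWith 1 s ∧ s default = 0 ∧
            r = (∑ j, |∑ i, (s (x j i) - s (y j i))| ^ p) ^ (1 / p)} * weakLp q f := by
        rw [S_eq hFY hpq x y]
        ring

lemma exists_unit_rows (hFY : IsFreeSpace Y default FY δY) {n : ℕ} (c : Fin n → ℤ)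
    (u : Fin n → Y) :
    ∃ (M : ℕ) (X Yv : Fin M → Y),
      ∑ k, (δY (X k) - δY (Yv k)) = ∑ i, (c i : ℝ) • δY (u i) := by
  classical
  set e := Fintype.equivFin ((i : Fin n) × Fin (c i).natAbs) with he
  refine ⟨Fintype.card ((i : Fin n) × Fin (c i).natAbs),
    fun k => if 0 ≤ c (e.symm k).1 then u (e.symm k).1 else default,
    fun k => if 0 ≤ c (e.symm k).1 then default else u (e.symm k).1, ?_⟩
  rw [← Equiv.sum_comp e (fun k => (δY (if 0 ≤ c (e.symm k).1 then u (e.symm k).1 else default)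
      - δY (if 0 ≤ c (e.symm k).1 then default else u (e.symm k).1)))]
  simp only [Equiv.symm_apply_apply]
  rw [← Finset.univ_sigma_univ, Finset.sum_sigma]
  refine Finset.sum_congr rfl fun i _ => ?_
  show ∑ _s : Fin (c i).natAbs, (δY (if 0 ≤ c i then u i else default)
      - δY (if 0 ≤ c i then default else u i)) = (c i : ℝ) • δY (u i)
  rw [Finset.sum_const, Finset.card_univ, Fintype.card_fin]
  by_cases h : 0 ≤ c i
  · rw [if_pos h, if_pos h, hFY.map_base, sub_zero, ← Nat.cast_smul_eq_nsmul ℝ]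
    congr 1
    rw [Nat.cast_natAbs]
    exact_mod_cast abs_of_nonneg h
  · rw [if_neg h, if_neg h, hFY.map_base, zero_sub, ← Nat.cast_smul_eq_nsmul ℝ]
    have h3 : (((c i).natAbs : ℝ)) = -(c i : ℝ) := by
      rw [Nat.cast_natAbs]
      exact_mod_cast abs_of_nonpos (lt_of_not_ge h).le
    rw [h3, neg_smul, smul_neg, neg_neg]

set_option maxHeartbeats 2000000 in
lemma p2_to_p3 (hFY : IsFreeSpace Y default FY δY) {p q : ℝ}
    (hpq : Real.HolderConjugate p q) (T : Y → W) (Tt : FY →L[ℝ] FW)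
    (hTt : ∀ x, Tt (δY x) = δW (T x))
    (h2 : ∃ K > 0, ∀ (m₁ m₂ : ℕ) (x y : Fin m₁ → Fin m₂ → Y)
        (f : Fin m₁ → StrongDual ℝ FW),
        |∑ j, ∑ i, (f j (δW (T (x j i))) - f j (δW (T (y j i))))| ≤
          K * sSup {r : ℝ | ∃ s : Y → ℝ, LipschitzWith 1 s ∧ s default = 0 ∧
              r = (∑ j, |∑ i, (s (x j i) - s (y j i))| ^ p) ^ (1 / p)} * weakLp q f) :
    IsPNuclear p q Tt := by
  classical
  obtain ⟨K, hK, hP⟩ := h2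
  have hp := hpq.pos
  have hq := hpq.symm.pos
  refine ⟨K, hK, fun m x φ => ?_⟩
  -- main claim without absolute values
  have main : ∀ ψ : Fin m → StrongDual ℝ FW,
      ∑ j, ψ j (Tt (x j)) ≤ K * weakLp p x * weakLp q ψ := by
    intro ψ
    refine le_of_forall_pos_le_add fun η hη => ?_
    set C : ℝ := (∑ j, ‖ψ j‖) * ‖Tt‖ + K * ((m : ℝ) ^ (1 / p)) * weakLp q ψ + 1 with hCdef
    have hC1 : 0 ≤ (∑ j, ‖ψ j‖) * ‖Tt‖ :=
      mul_nonneg (Finset.sum_nonneg fun j _ => norm_nonneg _) (norm_nonneg _)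
    have hC2 : 0 ≤ K * ((m : ℝ) ^ (1 / p)) * weakLp q ψ :=
      mul_nonneg (mul_nonneg hK.le (Real.rpow_nonneg (Nat.cast_nonneg m) _))
        (weakLp_nonneg hq ψ)
    have hC0 : 0 < C := by rw [hCdef]; linarith
    set θ : ℝ := min 1 (η / C) with hθdef
    have hθ0 : 0 < θ := lt_min one_pos (div_pos hη hC0)
    -- density approximation
    have approx : ∀ j, ∃ (nj : ℕ) (a : Fin nj → ℝ) (u : Fin nj → Y),
        ‖x j - ∑ i, a i • δY (u i)‖ < θ / 2 := by
      intro j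
      have hxj : x j ∈ closure ((Submodule.span ℝ (Set.range δY) : Submodule ℝ FY) : Set FY) := by
        rw [← Submodule.topologicalClosure_coe, hFY.dense_span]
        trivial
      obtain ⟨v, hv, hvd⟩ := Metric.mem_closure_iff.1 hxj (θ / 2) (by positivity)
      obtain ⟨nj, a, g, hg⟩ := Submodule.mem_span_set'.1 hv
      choose uu huu using fun i => (g i).2
      refine ⟨nj, a, uu, ?_⟩
      have hvv : ∑ i, a i • δY (uu i) = v := by
        rw [← hg]
        exact Finset.sum_congr rfl fun i _ => by rw [huu i]
      rw [hvv, ← dist_eq_norm]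
      exact hvd
    choose nn a u ha using approx
    set D : ℝ := (∑ j, ∑ i, ‖δY (u j i)‖) + 1 with hDdef
    have hD0 : 0 < D := by
      rw [hDdef]
      have : 0 ≤ ∑ j, ∑ i, ‖δY (u j i)‖ :=
        Finset.sum_nonneg fun j _ => Finset.sum_nonneg fun i _ => norm_nonneg _
      linarith
    obtain ⟨N, hN⟩ := exists_nat_gt (2 * D / θ)
    have hN0 : 0 < (N : ℝ) := lt_trans (by positivity) hN
    set c : (j : Fin m) → Fin (nn j) → ℤ := fun j i => round (a j i * N) with hcdef
    set Wv : Fin m → FY := fun j => ∑ i, ((c j i : ℝ)) • δY (u j i) with hWdef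
    set v' : Fin m → FY := fun j => (N : ℝ)⁻¹ • Wv j with hv'def
    have hround : ∀ j i, |a j i - (c j i : ℝ) / N| ≤ 1 / (2 * N) := by
      intro j i
      have h5 : |a j i * N - (c j i : ℝ)| ≤ 1 / 2 := abs_sub_round (a j i * N)
      have h6 : a j i - (c j i : ℝ) / N = (a j i * N - c j i) / N := by
        field_simp
      rw [h6, abs_div, abs_of_pos hN0]
      rw [div_le_div_iff₀ hN0 (by positivity)]
      calc |a j i * ↑N - ↑(c j i)| * (2 * ↑N) ≤ (1 / 2) * (2 * ↑N) := by
            exact mul_le_mul_of_nonneg_right h5 (by positivity)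
        _ = 1 * ↑N := by ring
    have hxv : ∀ j, ‖x j - v' j‖ ≤ θ := by
      intro j
      have e1 : ‖x j - ∑ i, a j i • δY (u j i)‖ < θ / 2 := ha j
      have e2 : ‖∑ i, a j i • δY (u j i) - v' j‖ ≤ θ / 2 := by
        have h7 : ∑ i, a j i • δY (u j i) - v' j
            = ∑ i, (a j i - (c j i : ℝ) / N) • δY (u j i) := by
          rw [hv'def]
          simp only [hWdef, Finset.smul_sum, ← Finset.sum_sub_distrib]
          refine Finset.sum_congr rfl fun i _ => ?_
          rw [smul_smul, ← sub_smul]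
          congr 1
          rw [div_eq_inv_mul]
        rw [h7]
        have h8 : ∑ i, ‖δY (u j i)‖ ≤ D := by
          rw [hDdef]
          have h9 : ∑ i, ‖δY (u j i)‖ ≤ ∑ j, ∑ i, ‖δY (u j i)‖ :=
            Finset.single_le_sum (f := fun j => ∑ i, ‖δY (u j i)‖)
              (fun j _ => Finset.sum_nonneg fun i _ => norm_nonneg _)
              (Finset.mem_univ j)
          linarith
        have h10 : 2 * D < ↑N * θ := by
          rw [div_lt_iff₀ hθ0] at hN
          linarith
        calc ‖∑ i, (a j i - (c j i : ℝ) / N) • δY (u j i)‖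
            ≤ ∑ i, ‖(a j i - (c j i : ℝ) / N) • δY (u j i)‖ := norm_sum_le _ _
          _ = ∑ i, |a j i - (c j i : ℝ) / N| * ‖δY (u j i)‖ := by
              refine Finset.sum_congr rfl fun i _ => ?_
              rw [norm_smul, Real.norm_eq_abs]
          _ ≤ ∑ i, (1 / (2 * N)) * ‖δY (u j i)‖ :=
              Finset.sum_le_sum fun i _ =>
                mul_le_mul_of_nonneg_right (hround j i) (norm_nonneg _)
          _ = (1 / (2 * N)) * ∑ i, ‖δY (u j i)‖ := by rw [Finset.mul_sum]
          _ ≤ (1 / (2 * N)) * D := by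
              refine mul_le_mul_of_nonneg_left h8 (by positivity)
          _ ≤ θ / 2 := by
              rw [div_mul_eq_mul_div, one_mul, div_le_div_iff₀ (by positivity) two_pos]
              nlinarith [hθ0.le, hN0.le]
      calc ‖x j - v' j‖ = ‖(x j - ∑ i, a j i • δY (u j i)) + (∑ i, a j i • δY (u j i) - v' j)‖ := by
            rw [sub_add_sub_cancel]
        _ ≤ ‖x j - ∑ i, a j i • δY (u j i)‖ + ‖∑ i, a j i • δY (u j i) - v' j‖ :=
            norm_add_le _ _
        _ ≤ θ := by linarith
    -- unit rows
    have hrows : ∀ j, ∃ (M : ℕ) (X Yv : Fin M → Y),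
        ∑ k, (δY (X k) - δY (Yv k)) = Wv j :=
      fun j => exists_unit_rows hFY (c j) (u j)
    choose M X Yv hXY using hrows
    set m₂ := Finset.univ.sup M with hm₂def
    set X' : Fin m → Fin m₂ → Y :=
      fun j k => if h : (k : ℕ) < M j then X j ⟨k, h⟩ else default with hX'def
    set Y' : Fin m → Fin m₂ → Y :=
      fun j k => if h : (k : ℕ) < M j then Yv j ⟨k, h⟩ else default with hY'def
    have hrow' : ∀ j, ∑ k, (δY (X' j k) - δY (Y' j k)) = Wv j := by
      intro j
      rw [← hXY j]
      have hMj : M j ≤ m₂ := Finset.le_sup (Finset.mem_univ j)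
      have hF : ∀ k : Fin m₂, δY (X' j k) - δY (Y' j k)
          = (fun kk : ℕ => if h : kk < M j then δY (X j ⟨kk, h⟩) - δY (Yv j ⟨kk, h⟩) else 0)
            (k : ℕ) := by
        intro k
        by_cases h : (k : ℕ) < M j
        · simp only [hX'def, hY'def, dif_pos h]
        · simp only [hX'def, hY'def, dif_neg h, sub_self]
      have hstep : ∑ k : Fin m₂, (δY (X' j k) - δY (Y' j k))
          = ∑ kk ∈ Finset.range m₂,
            (if h : kk < M j then δY (X j ⟨kk, h⟩) - δY (Yv j ⟨kk, h⟩) else 0) := by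
        rw [← Fin.sum_univ_eq_sum_range
          (fun kk => if h : kk < M j then δY (X j ⟨kk, h⟩) - δY (Yv j ⟨kk, h⟩) else 0) m₂]
        exact Finset.sum_congr rfl fun k _ => hF k
      rw [hstep, ← Finset.sum_subset (Finset.range_subset_range.2 hMj)
        (fun k _ hk => dif_neg (by simpa using hk)),
        ← Fin.sum_univ_eq_sum_range
          (fun kk => if h : kk < M j then δY (X j ⟨kk, h⟩) - δY (Yv j ⟨kk, h⟩) else 0) (M j)]
      refine Finset.sum_congr rfl fun k _ => ?_
      rw [dif_pos k.isLt]
    -- apply hP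
    have happ := hP m m₂ X' Y' (fun j => (N : ℝ)⁻¹ • ψ j)
    have hLHS : ∑ j, ∑ i, (((N : ℝ)⁻¹ • ψ j) (δW (T (X' j i)))
        - ((N : ℝ)⁻¹ • ψ j) (δW (T (Y' j i))))
        = ∑ j, ψ j (Tt (v' j)) := by
      refine Finset.sum_congr rfl fun j _ => ?_
      have h11 : ∀ i, ((N : ℝ)⁻¹ • ψ j) (δW (T (X' j i)))
          - ((N : ℝ)⁻¹ • ψ j) (δW (T (Y' j i)))
          = ((N : ℝ)⁻¹ • ψ j) (Tt (δY (X' j i) - δY (Y' j i))) := by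
        intro i
        rw [map_sub, hTt, hTt, map_sub]
      rw [Finset.sum_congr rfl fun i _ => h11 i, ← map_sum, ← map_sum, hrow' j]
      rw [hv'def]
      simp only [ContinuousLinearMap.smul_apply, map_smul, smul_eq_mul]
    rw [hLHS] at happ
    have hS : sSup {r : ℝ | ∃ s : Y → ℝ, LipschitzWith 1 s ∧ s default = 0 ∧
        r = (∑ j, |∑ i, (s (X' j i) - s (Y' j i))| ^ p) ^ (1 / p)}
        = weakLp p Wv := by
      rw [S_eq hFY hpq X' Y']
      congr 1
      funext j
      exact hrow' j
    rw [hS] at happ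
    have hWv2 : Wv = fun j => (N : ℝ) • v' j := by
      funext j
      rw [hv'def, smul_smul, mul_inv_cancel₀ hN0.ne', one_smul]
    have hw1 : weakLp p Wv = (N : ℝ) * weakLp p v' := by
      rw [hWv2]
      exact weakLp_smul hp hN0 v'
    have hw2 : weakLp q (fun j => (N : ℝ)⁻¹ • ψ j) = (N : ℝ)⁻¹ * weakLp q ψ :=
      weakLp_smul hq (inv_pos.2 hN0) ψ
    rw [hw1, hw2] at happ
    have happ' : |∑ j, ψ j (Tt (v' j))| ≤ K * weakLp p v' * weakLp q ψ := by
      refine happ.trans_eq ?_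
      field_simp
    have hvweak : weakLp p v' ≤ weakLp p x + (m : ℝ) ^ (1 / p) * θ := by
      refine (weakLp_le_add hpq.lt.le v' x).trans ?_
      have h12 := strongLp_le hp (fun j => v' j - x j) hθ0.le
        (fun j => by rw [norm_sub_rev]; exact hxv j)
      linarith
    have hcomp : ∑ j, ψ j (Tt (x j)) ≤ |∑ j, ψ j (Tt (v' j))|
        + θ * ((∑ j, ‖ψ j‖) * ‖Tt‖) := by
      have hdiff : ∑ j, ψ j (Tt (x j)) - ∑ j, ψ j (Tt (v' j))
          = ∑ j, ψ j (Tt (x j - v' j)) := by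
        rw [← Finset.sum_sub_distrib]
        exact Finset.sum_congr rfl fun j _ => by rw [map_sub, map_sub]
      have hbd : ∑ j, ψ j (Tt (x j - v' j)) ≤ ∑ j, ‖ψ j‖ * (‖Tt‖ * θ) := by
        refine Finset.sum_le_sum fun j _ => ?_
        calc ψ j (Tt (x j - v' j)) ≤ ‖ψ j (Tt (x j - v' j))‖ := le_abs_self _
          _ ≤ ‖ψ j‖ * ‖Tt (x j - v' j)‖ := (ψ j).le_opNorm _
          _ ≤ ‖ψ j‖ * (‖Tt‖ * θ) := by
              refine mul_le_mul_of_nonneg_left ?_ (norm_nonneg _)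
              refine (Tt.le_opNorm _).trans ?_
              exact mul_le_mul_of_nonneg_left (hxv j) (norm_nonneg _)
      have hsum2 : ∑ j, ‖ψ j‖ * (‖Tt‖ * θ) = θ * ((∑ j, ‖ψ j‖) * ‖Tt‖) := by
        rw [← Finset.sum_mul]
        ring
      have habs2 := le_abs_self (∑ j, ψ j (Tt (v' j)))
      linarith
    have hwq := weakLp_nonneg hq ψ
    calc ∑ j, ψ j (Tt (x j))
        ≤ K * weakLp p v' * weakLp q ψ + θ * ((∑ j, ‖ψ j‖) * ‖Tt‖) := by linarith
      _ ≤ K * (weakLp p x + (m : ℝ) ^ (1 / p) * θ) * weakLp q ψ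
          + θ * ((∑ j, ‖ψ j‖) * ‖Tt‖) := by
          refine add_le_add_left ?_ _
          exact mul_le_mul_of_nonneg_right
            (mul_le_mul_of_nonneg_left hvweak hK.le) hwq
      _ = K * weakLp p x * weakLp q ψ
          + θ * (K * ((m : ℝ) ^ (1 / p)) * weakLp q ψ + (∑ j, ‖ψ j‖) * ‖Tt‖) := by ring
      _ ≤ K * weakLp p x * weakLp q ψ + θ * C := by
          refine add_le_add_right (mul_le_mul_of_nonneg_left ?_ hθ0.le) _
          rw [hCdef]
          linarith
      _ ≤ K * weakLp p x * weakLp q ψ + η := by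
          have hθη : θ ≤ η / C := min_le_right _ _
          have : θ * C ≤ (η / C) * C := mul_le_mul_of_nonneg_right hθη hC0.le
          rw [div_mul_cancel₀ η hC0.ne'] at this
          linarith
  -- use main with signs
  set ε : Fin m → ℝ := fun j => if 0 ≤ φ j (Tt (x j)) then 1 else -1 with hεdef
  have hεabs : ∀ j, |ε j| ≤ 1 := fun j => by
    simp only [hεdef]
    split_ifs <;> simp
  have habs : ∑ j, |φ j (Tt (x j))| = ∑ j, (ε j • φ j) (Tt (x j)) := by
    refine Finset.sum_congr rfl fun j _ => ?_
    rw [ContinuousLinearMap.smul_apply, smul_eq_mul]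
    simp only [hεdef]
    split_ifs with h
    · rw [abs_of_nonneg h, one_mul]
    · rw [abs_of_neg (lt_of_not_ge h), neg_one_mul]
  rw [habs]
  calc ∑ j, (ε j • φ j) (Tt (x j))
      ≤ K * weakLp p x * weakLp q (fun j => ε j • φ j) := main _
    _ ≤ K * weakLp p x * weakLp q φ :=
        mul_le_mul_of_nonneg_left (weakLp_dom hq φ ε hεabs)
          (mul_nonneg hK.le (weakLp_nonneg hp x))

end MainLemmas

end MSAux

end MSAuxSection


/-- Theorem 3.6: equivalence of (1) `T` MS-Lipschitz `p`-nuclear,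
(2) the inequality (3.4), and (3) `T̃` (Cohen) `p`-nuclear. -/
theorem msLipPNuclear_tfae
    {Y W FY FW : Type*} [MetricSpace Y] [Inhabited Y] [MetricSpace W] [Inhabited W]
    [NormedAddCommGroup FY] [NormedSpace ℝ FY] [CompleteSpace FY]
    [NormedAddCommGroup FW] [NormedSpace ℝ FW] [CompleteSpace FW]
    {δY : Y → FY} {δW : W → FW}
    (hFY : IsFreeSpace Y default FY δY) (hFW : IsFreeSpace W default FW δW)
    {p q : ℝ} (hpq : p.HolderConjugate q)
    (T : Y → W) (hTlip : ∃ K, LipschitzWith K T) (hT0 : T default = default)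
    (Tt : FY →L[ℝ] FW) (hTt : ∀ x, Tt (δY x) = δW (T x)) :
    (MSLipPNuclear p q δY δW T ↔
      ∃ K > 0, ∀ (m₁ m₂ : ℕ) (x y : Fin m₁ → Fin m₂ → Y) (f : Fin m₁ → StrongDual ℝ FW),
        |∑ j, ∑ i, (f j (δW (T (x j i))) - f j (δW (T (y j i))))| ≤
          K * sSup {r : ℝ | ∃ s : Y → ℝ, LipschitzWith 1 s ∧ s default = 0 ∧
              r = (∑ j, |∑ i, (s (x j i) - s (y j i))| ^ p) ^ (1 / p)} *
            weakLp q f) ∧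
    (MSLipPNuclear p q δY δW T ↔ IsPNuclear p q Tt) := by
  have h12 := fun h => MSAux.p1_to_p2 hFY hpq T Tt hTt h
  have h23 := fun h => MSAux.p2_to_p3 hFY hpq T Tt hTt h
  have h31 := fun h => MSAux.p3_to_p1 hpq T Tt hTt h
  exact ⟨⟨h12, fun h => h31 (h23 h)⟩, ⟨fun h => h23 (h12 h), h31⟩⟩
end
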